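/- For i ∈ Σ_{n+1}, in any decomposition i ∼ u D_n v (2-move equivalence) with D_n = (n, n−1, …, 1), the length |v| is independent of the decomposition and equals the number of nodes of the wiring diagram G(i) lying below the wire ℓ_{n+1}, and |u| equals the number of nodes above ℓ_{n+1}; similarly, in any decomposition i ∼ u′ A_n v′ with A_n = (1, 2, …, n), |v′| equals the number of nodes below ℓ_1 and |u′| the number of nodes above ℓ_1. In particular the indices ind_D, ind_A and coindices coind_D, coind_A are well-defined functions on 2-move equivalence classes of Σ_{n+1}. -/

import Mathlib

open scoped Classical

noncomputable section

namespace StringPolytope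

/-! ### Words, reduced words, two-moves -/

/-- the simple transposition `s_a = (a, a+1)` acting on `ℕ` (wires are `1, …, n+1`). -/
def sTrans (a : ℕ) : Equiv.Perm ℕ := Equiv.swap a (a + 1)

/-- product `s_{i₁} ⋯ s_{i_N}` of the simple transpositions of a word. -/
def wordProd (w : List ℕ) : Equiv.Perm ℕ := (w.map sTrans).prod

/-- the longest element `w₀` of the symmetric group on `{1, …, n+1}`,
sending `k ↦ n + 2 - k` there and fixing everything else. -/
def longestPerm (n : ℕ) : Equiv.Perm ℕ :=
  Function.Involutive.toPerm
    (fun k => if 1 ≤ k ∧ k ≤ n + 1 then n + 2 - k else k)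
    (by intro k; dsimp only; split_ifs <;> omega)

/-- `w ∈ Σ_{n+1}`: a reduced word of the longest element of `S_{n+1}`,
i.e. a word over `[n] = {1,…,n}` of length `N = n(n+1)/2` whose product is `w₀`. -/
def IsReduced (n : ℕ) (w : List ℕ) : Prop :=
  w.length = n * (n + 1) / 2 ∧ (∀ a ∈ w, 1 ≤ a ∧ a ≤ n) ∧ wordProd w = longestPerm n

/-- a single 2-move: exchange two adjacent letters `(a, b)` with `|a - b| > 1`. -/
def TwoMoveStep (w w' : List ℕ) : Prop :=
  ∃ u v a b, (a + 1 < b ∨ b + 1 < a) ∧ w = u ++ a :: b :: v ∧ w' = u ++ b :: a :: v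

/-- 2-move equivalence of words. -/
def TwoMoveEquiv : List ℕ → List ℕ → Prop := Relation.ReflTransGen TwoMoveStep

/-- `A_n = (1, 2, …, n)`. -/
def ascWord (n : ℕ) : List ℕ := (List.range n).map (· + 1)

/-- `D_n = (n, n-1, …, 1)`. -/
def descWord (n : ℕ) : List ℕ := (ascWord n).reverse

/-! ### The wiring diagram -/

/-- the letter `i_j` of `w` (1-based index `j`); the node `t_j` lies in column `i_j`. -/
def letterAt (w : List ℕ) (j : ℕ) : ℕ := w.getD (j - 1) 0

/-- `1 ≤ j ≤ N`: `t_j` is an actual node of the diagram. -/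
def ValidNode (w : List ℕ) (j : ℕ) : Prop := 1 ≤ j ∧ j ≤ w.length

/-- the column-to-wire assignment just above node `t_j`
(at the top of the diagram, wire `k` is in column `k`). -/
def stateAbove (w : List ℕ) (j : ℕ) : Equiv.Perm ℕ := wordProd (w.take (j - 1))

/-- the column-to-wire assignment just below node `t_j`. -/
def stateBelow (w : List ℕ) (j : ℕ) : Equiv.Perm ℕ := wordProd (w.take j)

/-- one of the two wires crossing at node `t_j` (the one leaving upward-left). -/
def wireX (w : List ℕ) (j : ℕ) : ℕ := stateAbove w j (letterAt w j)

/-- the other wire crossing at node `t_j` (the one leaving upward-right). -/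
def wireY (w : List ℕ) (j : ℕ) : ℕ := stateAbove w j (letterAt w j + 1)

/-- the node `t_j` lies on the wire `ℓ_r`. -/
def NodeOnWire (w : List ℕ) (j r : ℕ) : Prop := wireX w j = r ∨ wireY w j = r

/-- given one wire `r` at node `t_j`, the other wire crossing there. -/
def otherWire (w : List ℕ) (j r : ℕ) : ℕ := if wireX w j = r then wireY w j else wireX w j

/-- the column of wire `ℓ_r` at the height of node `t_j`. -/
def wireCol (w : List ℕ) (j r : ℕ) : ℕ := (stateBelow w j).symm r

/-- node `t_j` lies strictly below the wire `ℓ_{n+1}`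
(which runs from the bottom-left corner to the top-right corner). -/
def BelowWireLast (n : ℕ) (w : List ℕ) (j : ℕ) : Prop :=
  wireCol w j (n + 1) < letterAt w j

/-- node `t_j` lies strictly above the wire `ℓ_{n+1}`. -/
def AboveWireLast (n : ℕ) (w : List ℕ) (j : ℕ) : Prop :=
  letterAt w j + 1 < wireCol w j (n + 1)

/-- node `t_j` lies strictly below the wire `ℓ_1`
(which runs from the bottom-right corner to the top-left corner). -/
def BelowWireOne (w : List ℕ) (j : ℕ) : Prop :=
  letterAt w j + 1 < wireCol w j 1

/-- node `t_j` lies strictly above the wire `ℓ_1`. -/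
def AboveWireOne (w : List ℕ) (j : ℕ) : Prop :=
  wireCol w j 1 < letterAt w j

/-! ### Rigorous (Gleizer–Postnikov) paths

A path in `G(i, k)` is encoded by `k` together with the list of its switching
nodes, in order of travel.  Wires `ℓ_1, …, ℓ_k` are oriented upward
(decreasing node index) and the remaining wires downward. -/

/-- the (1-based indices of the) nodes lying on wire `ℓ_r`, in order of increasing index. -/
def nodesOn (w : List ℕ) (r : ℕ) : List ℕ :=
  ((List.range w.length).map (· + 1)).filter (fun j => decide (NodeOnWire w j r))

/-- nodes on wire `ℓ_r` strictly between the nodes `t_a` and `t_b`. -/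
def segList (w : List ℕ) (r a b : ℕ) : List ℕ :=
  (nodesOn w r).filter (fun j => decide (min a b < j ∧ j < max a b))

/-- nodes on wire `ℓ_r` strictly below the node `t_a`. -/
def tailList (w : List ℕ) (r a : ℕ) : List ℕ :=
  (nodesOn w r).filter (fun j => decide (a < j))

/-- a forbidden fragment of `G(i, k)`: the path passes straight through node `t_j`
travelling along the wire `ℓ_r`, where the other wire `ℓ_b` crossing there has the same
orientation as `ℓ_r` and (`r < b` if both upward, `r > b` if both downward). -/
def Forbidden (w : List ℕ) (k j r : ℕ) : Prop :=
  (r ≤ k ∧ otherWire w j r ≤ k ∧ r < otherWire w j r) ∨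
  (k < r ∧ k < otherWire w j r ∧ otherWire w j r < r)

/-- travelling in `G(i,k)`: currently on wire `ℓ_r` at node `t_a` (just switched there),
with future switching nodes `ms`; the travel is legal and ends at `L_{k+1}`. -/
def TravelOK (w : List ℕ) (k : ℕ) : ℕ → ℕ → List ℕ → Prop
  | r, a, [] => r = k + 1 ∧ ∀ j ∈ tailList w r a, ¬ Forbidden w k j r
  | r, a, m :: ms =>
      ValidNode w m ∧ NodeOnWire w m r ∧
      (if r ≤ k then m < a else a < m) ∧
      (∀ j ∈ segList w r a m, ¬ Forbidden w k j r) ∧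
      TravelOK w k (otherWire w m r) m ms

/-- all nodes visited after the switch at node `t_a` onto wire `ℓ_r`. -/
def visitTail (w : List ℕ) : ℕ → ℕ → List ℕ → List ℕ
  | r, a, [] => tailList w r a
  | r, a, m :: ms => segList w r a m ++ m :: visitTail w (otherWire w m r) m ms

/-- the list of all nodes visited by the path (switching nodes and straight passes). -/
def visitList (w : List ℕ) (k : ℕ) : List ℕ → List ℕ
  | [] => []
  | m :: ms => tailList w k m ++ m :: visitTail w (otherWire w m k) m ms

/-- `(k, ms)` encodes a rigorous (Gleizer–Postnikov) path in `G(i, k)`: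
it starts at `L_k` going up the wire `ℓ_k`, switches wires exactly at the nodes
listed in `ms`, respects the orientation, ends at `L_{k+1}`, contains no forbidden
fragment and passes through each node at most once. -/
def IsGPPath (n : ℕ) (w : List ℕ) (k : ℕ) (ms : List ℕ) : Prop :=
  1 ≤ k ∧ k ≤ n ∧
  (match ms with
   | [] => False
   | m :: rest =>
       ValidNode w m ∧ NodeOnWire w m k ∧
       (∀ j ∈ tailList w k m, ¬ Forbidden w k j k) ∧
       TravelOK w k (otherWire w m k) m rest) ∧
  (visitList w k ms).Nodup

/-- the set `GP(i)` of all rigorous paths of `G(i)`. -/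
def GP (n : ℕ) (w : List ℕ) : Set (ℕ × List ℕ) := {p | IsGPPath n w p.1 p.2}

/-- `|GP(i)|`, the number of rigorous paths. -/
def numGP (n : ℕ) (w : List ℕ) : ℕ := (GP n w).ncard

/-- the successive switches of a path: `(node, from-wire, to-wire)`. -/
def pathSwitches (w : List ℕ) : ℕ → List ℕ → List (ℕ × ℕ × ℕ)
  | _, [] => []
  | r, m :: ms => (m, r, otherWire w m r) :: pathSwitches w (otherWire w m r) ms

/-- the wire-expression of a path: the successive wires travelled. -/
def wireSeq (w : List ℕ) : ℕ → List ℕ → List ℕ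
  | r, [] => [r]
  | r, m :: ms => r :: wireSeq w (otherWire w m r) ms

/-- the peaks of a path: switching nodes where the path switches from an
upward wire to a downward wire. -/
def peaks (w : List ℕ) (k : ℕ) (ms : List ℕ) : List ℕ :=
  ((pathSwitches w k ms).filter (fun e => decide (e.2.1 ≤ k ∧ k < e.2.2))).map (·.1)

/-! ### String cone, `λ`-cone, string polytope -/

/-- `N = n(n+1)/2`, the number of nodes. -/
abbrev Dim (n : ℕ) : ℕ := n * (n + 1) / 2

/-- the coefficient `a_j` of `t_j` in the string inequality of the path `(k, ms)`:
`+1` if the path switches at `t_j` from `ℓ_r` to `ℓ_s` with `r < s`,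
`-1` if it switches with `r > s`, and `0` otherwise. -/
def coeff (w : List ℕ) (k : ℕ) (ms : List ℕ) (j : ℕ) : ℝ :=
  ((pathSwitches w k ms).map (fun e =>
    if e.1 = j then (if e.2.1 < e.2.2 then (1 : ℝ) else -1) else 0)).sum

/-- the (primitive inward normal) coefficient vector of the string inequality of a path. -/
def normalVec (n : ℕ) (w : List ℕ) (p : ℕ × List ℕ) : Fin (Dim n) → ℝ :=
  fun j => coeff w p.1 p.2 ((j : ℕ) + 1)

/-- the left-hand side `∑ a_j t_j` of the string inequality of the path `p`. -/
def stringIneq (n : ℕ) (w : List ℕ) (p : ℕ × List ℕ) (t : Fin (Dim n) → ℝ) : ℝ :=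
  ∑ j : Fin (Dim n), normalVec n w p j * t j

/-- the string cone `C_i ⊆ ℝ^N`. -/
def stringCone (n : ℕ) (w : List ℕ) : Set (Fin (Dim n) → ℝ) :=
  {t | ∀ p ∈ GP n w, 0 ≤ stringIneq n w p t}

/-- the polyhedron cut out by all string inequalities except the one of `p₀`. -/
def stringConeExcept (n : ℕ) (w : List ℕ) (p₀ : ℕ × List ℕ) : Set (Fin (Dim n) → ℝ) :=
  {t | ∀ p ∈ GP n w, p ≠ p₀ → 0 ≤ stringIneq n w p t}

/-- the coefficient `a_k` in the `λ`-inequality of node `t_j`: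
`1` if `t_k` is one column left or right of `t_j`, `-2` if in the same column. -/
def lamCoeff (w : List ℕ) (j k : ℕ) : ℝ :=
  if letterAt w k = letterAt w j then -2
  else if letterAt w k = letterAt w j + 1 ∨ letterAt w k + 1 = letterAt w j then 1
  else 0

/-- the `λ`-inequality of node `t_{j+1}`:
`t_j ≤ λ_{i_j} + ∑_{k > j} a_k t_k`. -/
def LamIneq (n : ℕ) (w : List ℕ) (lam : ℕ → ℤ) (j : Fin (Dim n)) (t : Fin (Dim n) → ℝ) : Prop :=
  t j ≤ (lam (letterAt w ((j : ℕ) + 1)) : ℝ) +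
    ∑ k : Fin (Dim n),
      (if (j : ℕ) < (k : ℕ) then lamCoeff w ((j : ℕ) + 1) ((k : ℕ) + 1) else 0) * t k

/-- the `λ`-cone `C_i^λ ⊆ ℝ^N`. -/
def lamCone (n : ℕ) (w : List ℕ) (lam : ℕ → ℤ) : Set (Fin (Dim n) → ℝ) :=
  {t | ∀ j, LamIneq n w lam j t}

/-- the polyhedron cut out by all `λ`-inequalities except the one of `j₀`. -/
def lamConeExcept (n : ℕ) (w : List ℕ) (lam : ℕ → ℤ) (j₀ : Fin (Dim n)) :
    Set (Fin (Dim n) → ℝ) :=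
  {t | ∀ j, j ≠ j₀ → LamIneq n w lam j t}

/-- the string polytope `Δ_i(λ) = C_i ∩ C_i^λ`. -/
def stringPolytope (n : ℕ) (w : List ℕ) (lam : ℕ → ℤ) : Set (Fin (Dim n) → ℝ) :=
  stringCone n w ∩ lamCone n w lam

/-- `λ = λ_1 ϖ_1 + ⋯ + λ_n ϖ_n` is a dominant integral weight: all `λ_j ≥ 0`. -/
def Dominant (n : ℕ) (lam : ℕ → ℤ) : Prop := ∀ j, 1 ≤ j → j ≤ n → 0 ≤ lam j

/-- `λ` is a regular dominant integral weight: all `λ_j > 0`. -/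
def RegularDominant (n : ℕ) (lam : ℕ → ℤ) : Prop := ∀ j, 1 ≤ j → j ≤ n → 0 < lam j

/-! ### Unimodular equivalence, Gelfand–Cetlin polytope, facets -/

/-- `P` and `Q` are unimodularly equivalent: `Q = M(P) + v` with `M ∈ GL(m, ℤ)`, `v ∈ ℤ^m`. -/
def UnimodEquiv {m : ℕ} (P Q : Set (Fin m → ℝ)) : Prop :=
  ∃ (M : Matrix (Fin m) (Fin m) ℤ) (v : Fin m → ℤ), IsUnit M.det ∧
    Q = (fun x i => (∑ j, (M i j : ℝ) * x j) + (v i : ℝ)) '' P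

/-- the entry `x_{k,j}` (`1 ≤ j ≤ k ≤ n+1`) of a Gelfand–Cetlin pattern, where the
top row is `x_{n+1,j} = λ_j + ⋯ + λ_n` and `x_{n+1,n+1} = 0`; the pair `(k, j)` is
encoded as the coordinate `k(k-1)/2 + (j-1)` of `ℝ^N`. -/
def gcX (n : ℕ) (lam : ℕ → ℤ) (x : Fin (Dim n) → ℝ) (k j : ℕ) : ℝ :=
  if k = n + 1 then (if j ≤ n then ∑ t ∈ Finset.Icc j n, (lam t : ℝ) else 0)
  else if h : k * (k - 1) / 2 + (j - 1) < Dim n then x ⟨k * (k - 1) / 2 + (j - 1), h⟩ else 0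

/-- the Gelfand–Cetlin polytope `GC(λ) ⊆ ℝ^N`. -/
def GCPolytope (n : ℕ) (lam : ℕ → ℤ) : Set (Fin (Dim n) → ℝ) :=
  {x | ∀ k j, 1 ≤ k → k ≤ n → 1 ≤ j → j ≤ k →
      gcX n lam x k j ≤ gcX n lam x (k + 1) j ∧
      gcX n lam x (k + 1) (j + 1) ≤ gcX n lam x k j}

/-- a face of a convex set: a convex extreme subset. -/
def IsFaceSet {m : ℕ} (S F : Set (Fin m → ℝ)) : Prop := IsExtreme ℝ S F ∧ Convex ℝ F

/-- a facet: a maximal proper face. -/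
def IsFacet {m : ℕ} (S F : Set (Fin m → ℝ)) : Prop :=
  IsFaceSet S F ∧ F ≠ S ∧ ∀ G, IsFaceSet S G → G ≠ S → F ⊆ G → F = G

/-- the number of facets. -/
def numFacets {m : ℕ} (S : Set (Fin m → ℝ)) : ℕ := {F | IsFacet S F}.ncard

/-- combinatorial equivalence: an inclusion-preserving bijection between face lattices. -/
def CombEquiv {m : ℕ} (S T : Set (Fin m → ℝ)) : Prop :=
  ∃ e : {F // IsFaceSet S F} ≃ {F // IsFaceSet T F},
    ∀ F G : {F // IsFaceSet S F}, F.1 ⊆ G.1 ↔ (e F).1 ⊆ (e G).1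

/-! ### Indices, contractions and extensions -/

/-- the `D`-index `ind_D(i) = |i_D^+|` for a decomposition `i ∼ i_D^- D_n i_D^+`
(independent of the decomposition). -/
def indD (n : ℕ) (w : List ℕ) : ℕ :=
  sInf {s | ∃ u v : List ℕ, v.length = s ∧ TwoMoveEquiv w (u ++ descWord n ++ v)}

/-- the `A`-index `ind_A(i) = |i_A^+|` for a decomposition `i ∼ i_A^- A_n i_A^+`. -/
def indA (n : ℕ) (w : List ℕ) : ℕ :=
  sInf {s | ∃ u v : List ℕ, v.length = s ∧ TwoMoveEquiv w (u ++ ascWord n ++ v)}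

/-- `w'` is a `D`-contraction `C_D(w) = i_D^- (i_D^+ - 1)` of `w ∈ Σ_{n+1}`. -/
def IsContractionD (n : ℕ) (w w' : List ℕ) : Prop :=
  ∃ u v : List ℕ, TwoMoveEquiv w (u ++ descWord n ++ v) ∧ w' = u ++ v.map (· - 1)

/-- `w'` is an `A`-contraction `C_A(w) = (i_A^- - 1) i_A^+` of `w ∈ Σ_{n+1}`. -/
def IsContractionA (n : ℕ) (w w' : List ℕ) : Prop :=
  ∃ u v : List ℕ, TwoMoveEquiv w (u ++ ascWord n ++ v) ∧ w' = u.map (· - 1) ++ v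

/-- the `D`-extension `E_D(s) : Σ_{n+1} → Σ_{n+2}`,
`i = i^-(s) i^+(s) ↦ i^-(s) D_{n+1} (i^+(s) + 1)` where `|i^+(s)| = s`. -/
def extD (n : ℕ) (s : ℕ) (w : List ℕ) : List ℕ :=
  w.take (w.length - s) ++ descWord (n + 1) ++ (w.drop (w.length - s)).map (· + 1)

/-- the `A`-extension `E_A(s) : Σ_{n+1} → Σ_{n+2}`,
`i = i^-(s) i^+(s) ↦ (i^-(s) + 1) A_{n+1} i^+(s)`. -/
def extA (n : ℕ) (s : ℕ) (w : List ℕ) : List ℕ :=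
  (w.take (w.length - s)).map (· + 1) ++ ascWord (n + 1) ++ w.drop (w.length - s)

/-- there exists `(σ_1, …, σ_n) ∈ {A, D}^n` (here `true = D`, `false = A`) such that
`ind_{σ_k}(C_{σ_{k+1}} ∘ ⋯ ∘ C_{σ_n}(i)) = 0` for all `k = n, …, 1`. -/
def SimplicialWord (n : ℕ) (w : List ℕ) : Prop :=
  ∃ (σ : ℕ → Bool) (c : ℕ → List ℕ), c n = w ∧
    ∀ k, 1 ≤ k → k ≤ n →
      (if σ k then IsContractionD k (c k) (c (k - 1)) ∧ indD k (c k) = 0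
       else IsContractionA k (c k) (c (k - 1)) ∧ indA k (c k) = 0)


/-- the `D`-coindex `coind_D(i) = |i_D^-|`. -/
def coindD (n : ℕ) (w : List ℕ) : ℕ :=
  sInf {s | ∃ u v : List ℕ, u.length = s ∧ TwoMoveEquiv w (u ++ descWord n ++ v)}

/-- the `A`-coindex `coind_A(i) = |i_A^-|`. -/
def coindA (n : ℕ) (w : List ℕ) : ℕ :=
  sInf {s | ∃ u v : List ℕ, u.length = s ∧ TwoMoveEquiv w (u ++ ascWord n ++ v)}

/-- the `a`-th (0-based) coordinate of a point of `ℝ^N`. -/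
def entry (n : ℕ) (t : Fin (Dim n) → ℝ) (a : ℕ) : ℝ :=
  if h : a < Dim n then t ⟨a, h⟩ else 0

/-- the product of cones
`t_1 ≥ 0`, `t_2 ≥ t_3 ≥ 0`, …, `t_{N-n+1} ≥ ⋯ ≥ t_N ≥ 0` (in `ℝ^N`, 1-based:
for `k = 1, …, n` the chain `t_{k(k-1)/2+1} ≥ ⋯ ≥ t_{k(k-1)/2+k} ≥ 0`). -/
def chainCone (n : ℕ) : Set (Fin (Dim n) → ℝ) :=
  {t | ∀ k j, 1 ≤ k → k ≤ n → 1 ≤ j → j ≤ k →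
    (if j = k then 0 else entry n t (k * (k - 1) / 2 + j)) ≤
      entry n t (k * (k - 1) / 2 + (j - 1))}

/-! basics -/

lemma sTrans_apply (a x : ℕ) :
    sTrans a x = if x = a then a + 1 else if x = a + 1 then a else x := by
  simp [sTrans, Equiv.swap_apply_def]

lemma sTrans_symm (a : ℕ) : (sTrans a).symm = sTrans a := by
  simp [sTrans]

lemma sTrans_comm {a b : ℕ} (h : a + 1 < b ∨ b + 1 < a) :
    sTrans a * sTrans b = sTrans b * sTrans a := by
  ext x
  simp only [Equiv.Perm.mul_apply, sTrans_apply]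
  split_ifs <;> omega

lemma wordProd_append (u v : List ℕ) :
    wordProd (u ++ v) = wordProd u * wordProd v := by
  simp [wordProd]

lemma wordProd_cons (a : ℕ) (w : List ℕ) :
    wordProd (a :: w) = sTrans a * wordProd w := by
  simp [wordProd]

lemma wordProd_nil : wordProd [] = 1 := by simp [wordProd]

lemma wordProd_singleton (a : ℕ) : wordProd [a] = sTrans a := by simp [wordProd]

lemma longestPerm_apply (n k : ℕ) :
    longestPerm n k = if 1 ≤ k ∧ k ≤ n + 1 then n + 2 - k else k := rfl

lemma longestPerm_symm (n : ℕ) : (longestPerm n).symm = longestPerm n :=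
  Function.Involutive.toPerm_symm _

/-! trajectory -/

/-- column of wire `r` after the first `j` crossings (0-based level). -/
def colAt (w : List ℕ) (r j : ℕ) : ℕ := (wordProd (w.take j)).symm r

lemma colAt_zero (w : List ℕ) (r : ℕ) : colAt w r 0 = r := by
  simp [colAt, wordProd_nil, Equiv.Perm.one_symm]

lemma take_succ_of_lt {w : List ℕ} {j : ℕ} (h : j < w.length) :
    w.take (j + 1) = w.take j ++ [w.getD j 0] := by
  rw [List.getD_eq_getElem w 0 h]
  exact (List.take_concat_get' w j h).symm

lemma colAt_succ {w : List ℕ} {j : ℕ} (h : j < w.length) (r : ℕ) :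
    colAt w r (j + 1) = sTrans (w.getD j 0) (colAt w r j) := by
  rw [colAt, take_succ_of_lt h, wordProd_append, wordProd_singleton]
  rw [Equiv.Perm.mul_def, Equiv.symm_trans_apply, sTrans_symm]
  rfl

lemma colAt_length {n : ℕ} {w : List ℕ} (hw : wordProd w = longestPerm n)
    {r : ℕ} (h1 : 1 ≤ r) (h2 : r ≤ n + 1) : colAt w r w.length = n + 2 - r := by
  rw [colAt, List.take_length, hw, longestPerm_symm]
  simp [longestPerm_apply, h1, h2]


def IsReducedAux (n : ℕ) (w : List ℕ) : Prop :=
  w.length = n * (n + 1) / 2 ∧ (∀ a ∈ w, 1 ≤ a ∧ a ≤ n) ∧ wordProd w = longestPerm n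
/-! crossings -/

lemma colAt_succ_of_ge {w : List ℕ} {j : ℕ} (h : w.length ≤ j) (r : ℕ) :
    colAt w r (j + 1) = colAt w r j := by
  unfold colAt
  rw [List.take_of_length_le h, List.take_of_length_le (le_trans h (Nat.le_succ j))]

/-- node `t_{j+1}` (0-based `j`) is a crossing of wire `r`. -/
def CrossAt (w : List ℕ) (r j : ℕ) : Prop :=
  colAt w r j = w.getD j 0 ∨ colAt w r j = w.getD j 0 + 1

lemma colAt_succ_of_not_cross {w : List ℕ} {r j : ℕ} (h : j < w.length)
    (hc : ¬ CrossAt w r j) : colAt w r (j + 1) = colAt w r j := by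
  rw [colAt_succ h, sTrans_apply]
  unfold CrossAt at hc
  push_neg at hc
  split_ifs with h1 h2
  · exact absurd h1 hc.1
  · exact absurd h2 hc.2
  · rfl

lemma colAt_inj {w : List ℕ} {x y j : ℕ} (h : colAt w x j = colAt w y j) : x = y :=
  (Equiv.injective _) h

lemma wordProd_mem_Icc {n : ℕ} :
    ∀ {w : List ℕ}, (∀ a ∈ w, 1 ≤ a ∧ a ≤ n) → ∀ x, 1 ≤ x → x ≤ n + 1 →
      (1 ≤ wordProd w x ∧ wordProd w x ≤ n + 1) ∧
      (1 ≤ (wordProd w).symm x ∧ (wordProd w).symm x ≤ n + 1) := by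
  intro w
  induction w with
  | nil => intro _ x h1 h2; simp [wordProd_nil, Equiv.Perm.one_symm]; omega
  | cons a t ih =>
    intro hw x h1 h2
    have ha := hw a (by simp)
    have ht : ∀ b ∈ t, 1 ≤ b ∧ b ≤ n := fun b hb => hw b (by simp [hb])
    rw [wordProd_cons]
    constructor
    · rw [Equiv.Perm.mul_apply]
      have hp := ((ih ht x h1 h2).1)
      rw [sTrans_apply]
      split_ifs <;> omega
    · rw [Equiv.Perm.mul_def, Equiv.symm_trans_apply, sTrans_symm]
      have h3 : 1 ≤ sTrans a x ∧ sTrans a x ≤ n + 1 := by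
        rw [sTrans_apply]; split_ifs <;> omega
      exact (ih ht (sTrans a x) h3.1 h3.2).2

lemma colAt_mem_Icc {n : ℕ} {w : List ℕ} (hw : ∀ a ∈ w, 1 ≤ a ∧ a ≤ n)
    {r : ℕ} (h1 : 1 ≤ r) (h2 : r ≤ n + 1) (j : ℕ) :
    1 ≤ colAt w r j ∧ colAt w r j ≤ n + 1 := by
  have ht : ∀ a ∈ w.take j, 1 ≤ a ∧ a ≤ n := fun a ha => hw a (List.mem_of_mem_take ha)
  exact (wordProd_mem_Icc ht r h1 h2).2
/-! each pair of wires crosses -/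

lemma exists_flip {w : List ℕ} {n x y : ℕ} (hw : wordProd w = longestPerm n)
    (h1 : 1 ≤ x) (hxy : x < y) (h2 : y ≤ n + 1) :
    ∃ j < w.length, CrossAt w x j ∧ CrossAt w y j := by
  set L := w.length with hL
  have hP0 : colAt w x 0 < colAt w y 0 := by rw [colAt_zero, colAt_zero]; exact hxy
  have hPL : ¬ colAt w x L < colAt w y L := by
    rw [colAt_length hw h1 (le_of_lt (lt_of_lt_of_le hxy h2)),
      colAt_length hw (le_trans h1 (le_of_lt hxy)) h2]
    omega
  -- find a flip index
  have key : ∃ j < L, colAt w x j < colAt w y j ∧ ¬ colAt w x (j + 1) < colAt w y (j + 1) := by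
    by_contra hcon
    push_neg at hcon
    have : ∀ j ≤ L, colAt w x j < colAt w y j := by
      intro j
      induction j with
      | zero => intro _; exact hP0
      | succ k ih =>
        intro hk
        exact hcon k (by omega) (ih (by omega))
    exact hPL (this L le_rfl)
  obtain ⟨j, hj, hlt, hge⟩ := key
  set a := w.getD j 0 with ha
  set u := colAt w x j with hu
  set v := colAt w y j with hv
  have hux : colAt w x (j + 1) = sTrans a u := colAt_succ hj x
  have hvy : colAt w y (j + 1) = sTrans a v := colAt_succ hj y
  have hne : sTrans a u ≠ sTrans a v := by
    intro h
    have : u = v := (Equiv.injective _) h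
    omega
  rw [hux, hvy] at hge
  have hu' : sTrans a u = if u = a then a + 1 else if u = a + 1 then a else u := sTrans_apply a u
  have hv' : sTrans a v = if v = a then a + 1 else if v = a + 1 then a else v := sTrans_apply a v
  have : u = a ∧ v = a + 1 := by
    split_ifs at hu' hv' <;> omega
  refine ⟨j, hj, Or.inl ?_, Or.inr ?_⟩
  · show colAt w x j = w.getD j 0
    rw [← hu, ← ha]; exact this.1
  · show colAt w y j = w.getD j 0 + 1
    rw [← hv, ← ha]; exact this.2

lemma exists_cross_both {w : List ℕ} {n x y : ℕ} (hw : wordProd w = longestPerm n)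
    (hx1 : 1 ≤ x) (hx2 : x ≤ n + 1) (hy1 : 1 ≤ y) (hy2 : y ≤ n + 1) (hne : x ≠ y) :
    ∃ j < w.length, CrossAt w x j ∧ CrossAt w y j := by
  rcases lt_or_gt_of_ne hne with h | h
  · exact exists_flip hw hx1 h hy2
  · obtain ⟨j, hj, h1, h2⟩ := exists_flip hw hy1 h hx2
    exact ⟨j, hj, h2, h1⟩

/-! counting crossings -/

/-- total number of crossings of wire `r`. -/
def cnt (w : List ℕ) (r : ℕ) : ℕ :=
  ((Finset.range w.length).filter (fun j => CrossAt w r j)).card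

lemma filter_cross_eq {n : ℕ} {w : List ℕ} (hletters : ∀ a ∈ w, 1 ≤ a ∧ a ≤ n)
    {j : ℕ} (hj : j < w.length) :
    (Finset.Icc 1 (n + 1)).filter (fun r => CrossAt w r j) =
      {wordProd (w.take j) (w.getD j 0), wordProd (w.take j) (w.getD j 0 + 1)} := by
  have haj : 1 ≤ w.getD j 0 ∧ w.getD j 0 ≤ n := by
    rw [List.getD_eq_getElem w 0 hj]
    exact hletters _ (List.getElem_mem hj)
  have htake : ∀ a ∈ w.take j, 1 ≤ a ∧ a ≤ n := fun a ha => hletters a (List.mem_of_mem_take ha)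
  ext r
  simp only [Finset.mem_filter, Finset.mem_Icc, Finset.mem_insert, Finset.mem_singleton]
  constructor
  · rintro ⟨⟨hr1, hr2⟩, hc | hc⟩
    · left
      have : wordProd (w.take j) (colAt w r j) = r := Equiv.apply_symm_apply _ r
      rw [← this, hc]
    · right
      have : wordProd (w.take j) (colAt w r j) = r := Equiv.apply_symm_apply _ r
      rw [← this, hc]
  · rintro (rfl | rfl)
    · refine ⟨(wordProd_mem_Icc htake _ haj.1 (by omega)).1, Or.inl ?_⟩
      exact Equiv.symm_apply_apply _ _
    · refine ⟨(wordProd_mem_Icc htake _ (by omega) (by omega)).1, Or.inr ?_⟩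
      exact Equiv.symm_apply_apply _ _

lemma card_filter_cross {n : ℕ} {w : List ℕ} (hletters : ∀ a ∈ w, 1 ≤ a ∧ a ≤ n)
    {j : ℕ} (hj : j < w.length) :
    ((Finset.Icc 1 (n + 1)).filter (fun r => CrossAt w r j)).card = 2 := by
  rw [filter_cross_eq hletters hj]
  rw [Finset.card_pair]
  intro h
  have := (Equiv.injective (wordProd (w.take j))) h
  omega

lemma sum_cnt {n : ℕ} {w : List ℕ} (hletters : ∀ a ∈ w, 1 ≤ a ∧ a ≤ n) :
    ∑ r ∈ Finset.Icc 1 (n + 1), cnt w r = 2 * w.length := by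
  have : ∀ r, cnt w r = ∑ j ∈ Finset.range w.length, if CrossAt w r j then 1 else 0 := by
    intro r; rw [cnt, Finset.card_filter]
  simp only [this]
  rw [Finset.sum_comm]
  have : ∀ j ∈ Finset.range w.length,
      (∑ r ∈ Finset.Icc 1 (n + 1), if CrossAt w r j then 1 else 0) = 2 := by
    intro j hj
    rw [← Finset.card_filter]
    exact card_filter_cross hletters (Finset.mem_range.mp hj)
  rw [Finset.sum_congr rfl this, Finset.sum_const, Finset.card_range]
  ring

lemma cnt_ge {n : ℕ} {w : List ℕ} (hw : wordProd w = longestPerm n)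
    {r : ℕ} (hr1 : 1 ≤ r) (hr2 : r ≤ n + 1) : n ≤ cnt w r := by
  classical
  have hch : ∀ y ∈ (Finset.Icc 1 (n + 1)).erase r,
      ∃ j, j < w.length ∧ CrossAt w r j ∧ CrossAt w y j := by
    intro y hy
    rw [Finset.mem_erase, Finset.mem_Icc] at hy
    obtain ⟨j, hj, h1, h2⟩ := exists_cross_both hw hr1 hr2 hy.2.1 hy.2.2 (Ne.symm hy.1)
    exact ⟨j, hj, h1, h2⟩
  choose f hf1 hf2 hf3 using hch
  have hcard : ((Finset.Icc 1 (n + 1)).erase r).card ≤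
      ((Finset.range w.length).filter (fun j => CrossAt w r j)).card := by
    apply Finset.card_le_card_of_injOn (fun y => if h : y ∈ (Finset.Icc 1 (n+1)).erase r then f y h else 0)
    · intro y hy
      have hy : y ∈ (Finset.Icc 1 (n+1)).erase r := hy
      show (if h : y ∈ (Finset.Icc 1 (n+1)).erase r then f y h else 0) ∈
        (Finset.range w.length).filter (fun j => CrossAt w r j)
      rw [dif_pos hy, Finset.mem_filter, Finset.mem_range]
      exact ⟨hf1 y hy, hf2 y hy⟩
    · intro y1 hy1' y2 hy2' heq
      have hy1 : y1 ∈ (Finset.Icc 1 (n+1)).erase r := hy1'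
      have hy2 : y2 ∈ (Finset.Icc 1 (n+1)).erase r := hy2'
      dsimp only at heq
      rw [dif_pos hy1, dif_pos hy2] at heq
      by_contra hne
      set j := f y1 hy1 with hj
      have c1 : CrossAt w y1 j := hf3 y1 hy1
      have c2 : CrossAt w y2 j := by
        have h2 := hf3 y2 hy2
        rw [← heq] at h2
        exact h2
      have c3 : CrossAt w r j := hf2 y1 hy1
      have d1 : colAt w y1 j ≠ colAt w y2 j := fun h => hne (colAt_inj h)
      have hyr1 : y1 ≠ r := (Finset.mem_erase.mp hy1).1
      have hyr2 : y2 ≠ r := (Finset.mem_erase.mp hy2).1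
      have d2 : colAt w y1 j ≠ colAt w r j := fun h => hyr1 (colAt_inj h)
      have d3 : colAt w y2 j ≠ colAt w r j := fun h => hyr2 (colAt_inj h)
      unfold CrossAt at c1 c2 c3
      rcases c1 with h | h <;> rcases c2 with h' | h' <;> rcases c3 with h'' | h'' <;> omega
  have hn : ((Finset.Icc 1 (n + 1)).erase r).card = n := by
    rw [Finset.card_erase_of_mem (Finset.mem_Icc.mpr ⟨hr1, hr2⟩), Nat.card_Icc]
    omega
  rw [← hn]
  exact hcard
lemma cnt_eq {n : ℕ} {w : List ℕ} (hred : IsReducedAux n w)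
    {r : ℕ} (hr1 : 1 ≤ r) (hr2 : r ≤ n + 1) : cnt w r = n := by
  obtain ⟨hlen, hletters, hw⟩ := hred
  by_contra hne
  have hgt : n < cnt w r := lt_of_le_of_ne (cnt_ge hw hr1 hr2) (Ne.symm hne)
  have hlt : (∑ s ∈ Finset.Icc 1 (n + 1), n) < ∑ s ∈ Finset.Icc 1 (n + 1), cnt w s := by
    apply Finset.sum_lt_sum
    · intro s hs
      rw [Finset.mem_Icc] at hs
      exact cnt_ge hw hs.1 hs.2
    · exact ⟨r, Finset.mem_Icc.mpr ⟨hr1, hr2⟩, hgt⟩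
  rw [sum_cnt hletters, Finset.sum_const, Nat.card_Icc, smul_eq_mul, hlen] at hlt
  have hxx : (n + 1 + 1 - 1) * n = n * (n + 1) := by
    have : n + 1 + 1 - 1 = n + 1 := by omega
    rw [this, Nat.mul_comm]
  rw [hxx] at hlt
  have h2 : n * (n + 1) % 2 = 0 := by
    rcases Nat.even_mul_succ_self n with ⟨k, hk⟩
    omega
  omega

/-! the trajectory of wire `n+1` -/

/-- number of crossings of wire `r` among the first `j` nodes. -/
def kcnt (w : List ℕ) (r j : ℕ) : ℕ :=
  ((Finset.range j).filter (fun i => CrossAt w r i)).card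


lemma kcnt_succ_of_cross {w : List ℕ} {r j : ℕ} (h : CrossAt w r j) :
    kcnt w r (j + 1) = kcnt w r j + 1 := by
  unfold kcnt
  rw [Finset.range_add_one, Finset.filter_insert, if_pos h,
    Finset.card_insert_of_notMem (by simp)]

lemma kcnt_succ_of_not_cross {w : List ℕ} {r j : ℕ} (h : ¬ CrossAt w r j) :
    kcnt w r (j + 1) = kcnt w r j := by
  unfold kcnt
  rw [Finset.range_add_one, Finset.filter_insert, if_neg h]

lemma kcnt_mono {w : List ℕ} {r : ℕ} {j j' : ℕ} (h : j ≤ j') : kcnt w r j ≤ kcnt w r j' :=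
  Finset.card_le_card (Finset.filter_subset_filter _ (by simpa using Finset.range_subset_range.mpr h))

lemma kcnt_length {w : List ℕ} {r : ℕ} : kcnt w r w.length = cnt w r := rfl

section Traj

variable {n : ℕ} {w : List ℕ}

/-- wire `n+1` never crosses "rightwards". -/
lemma no_up_step (hred : IsReducedAux n w) : ∀ j < w.length, colAt w (n + 1) j ≠ w.getD j 0 := by
  obtain ⟨hlen, hletters, hw⟩ := id hred
  -- basic inequality: colAt + kcnt ≥ n + 1
  have base : ∀ j ≤ w.length, n + 1 ≤ colAt w (n + 1) j + kcnt w (n + 1) j := by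
    intro j hj
    induction j with
    | zero => simp [colAt_zero, kcnt]
    | succ k ih =>
      have hk : k < w.length := by omega
      by_cases hc : CrossAt w (n + 1) k
      · have hstep := colAt_succ hk (n + 1)
        have h1 := kcnt_succ_of_cross (w := w) (r := n + 1) hc
        rw [sTrans_apply] at hstep
        have := ih (by omega)
        split_ifs at hstep <;> omega
      · rw [colAt_succ_of_not_cross hk hc, kcnt_succ_of_not_cross hc]
        have := ih (by omega)
        omega
  intro j0 hj0 hup
  -- after an up-step the invariant is off by 2
  have after : ∀ j, j0 < j → j ≤ w.length → n + 3 ≤ colAt w (n + 1) j + kcnt w (n + 1) j := by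
    intro j
    induction j with
    | zero => omega
    | succ k ih =>
      intro hk1 hk2
      have hkL : k < w.length := by omega
      rcases Nat.lt_or_ge j0 k with hlt | hge
      · by_cases hc : CrossAt w (n + 1) k
        · have hstep := colAt_succ hkL (n + 1)
          have h1 := kcnt_succ_of_cross (w := w) (r := n + 1) hc
          rw [sTrans_apply] at hstep
          have := ih hlt (by omega)
          split_ifs at hstep <;> omega
        · rw [colAt_succ_of_not_cross hkL hc, kcnt_succ_of_not_cross hc]
          have := ih hlt (by omega)
          omega
      · -- k = j0 : the up-step itself
        have hk0 : k = j0 := by omega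
        subst hk0
        have hc : CrossAt w (n + 1) k := Or.inl hup
        have hstep := colAt_succ hkL (n + 1)
        have h1 := kcnt_succ_of_cross (w := w) (r := n + 1) hc
        rw [sTrans_apply, if_pos hup] at hstep
        have := base k (by omega)
        omega
  have hend := after w.length (by omega) le_rfl
  have hcL : colAt w (n + 1) w.length = 1 := by
    have := colAt_length hw (r := n + 1) (by omega) (by omega)
    omega
  have hkL : kcnt w (n + 1) w.length = n :=
    kcnt_length.trans (cnt_eq hred (by omega) (by omega))
  omega

/-- exact trajectory of wire `n+1`. -/
lemma traj_eq (hred : IsReducedAux n w) : ∀ j ≤ w.length, colAt w (n + 1) j + kcnt w (n + 1) j = n + 1 := by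
  obtain ⟨hlen, hletters, hw⟩ := id hred
  intro j hj
  induction j with
  | zero => simp [colAt_zero, kcnt]
  | succ k ih =>
    have hk : k < w.length := by omega
    by_cases hc : CrossAt w (n + 1) k
    · have hdown : colAt w (n + 1) k = w.getD k 0 + 1 := by
        rcases hc with h | h
        · exact absurd h (no_up_step hred k hk)
        · exact h
      have hstep := colAt_succ hk (n + 1)
      rw [sTrans_apply] at hstep
      have h1 := kcnt_succ_of_cross (w := w) (r := n + 1) hc
      have := ih (by omega)
      split_ifs at hstep <;> omega
    · rw [colAt_succ_of_not_cross hk hc, kcnt_succ_of_not_cross hc]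
      exact ih (by omega)

end Traj
/-! the block decomposition -/

lemma descWord_length (n : ℕ) : (descWord n).length = n := by
  simp [descWord, ascWord]

lemma descWord_getD {n t : ℕ} (ht : t < n) : (descWord n).getD t 0 = n - t := by
  have hlen : (descWord n).length = n := descWord_length n
  rw [List.getD_eq_getElem _ 0 (by omega)]
  unfold descWord ascWord
  rw [List.getElem_reverse]
  simp only [List.getElem_map, List.getElem_range, List.length_map, List.length_range]
  omega

lemma wireCol_eq_colAt (w : List ℕ) (j r : ℕ) : wireCol w j r = colAt w r j := rfl

section Block

variable {n : ℕ} {u v : List ℕ}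

lemma block_letter (t : ℕ) (ht : t < n) :
    (u ++ descWord n ++ v).getD (u.length + t) 0 = n - t := by
  rw [List.append_assoc, List.getD_append_right _ _ _ _ (by omega)]
  have h1 : u.length + t - u.length = t := by omega
  rw [h1, List.getD_append _ _ _ _ (by rw [descWord_length]; exact ht)]
  exact descWord_getD ht

lemma block_kcnt_u (hred : IsReducedAux n (u ++ descWord n ++ v)) :
    kcnt (u ++ descWord n ++ v) (n + 1) u.length = 0 := by
  set w := u ++ descWord n ++ v with hw
  set p := u.length with hp
  set k := kcnt w (n + 1) p with hk
  have hLlen : w.length = p + n + v.length := by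
    simp only [hw, hp, List.length_append, descWord_length]
  have hkn : k ≤ n := by
    have h1 : k ≤ kcnt w (n + 1) w.length := kcnt_mono (by omega)
    rw [kcnt_length, cnt_eq hred (by omega) (by omega)] at h1
    exact h1
  by_contra hne
  have hk1 : 1 ≤ k := by omega
  have stable : ∀ t, t ≤ k - 1 → kcnt w (n + 1) (p + t) = k := by
    intro t
    induction t with
    | zero => intro _; rw [Nat.add_zero]; exact hk.symm
    | succ s ih =>
      intro hs
      have ihs := ih (by omega)
      have hcol : colAt w (n + 1) (p + s) = n + 1 - k := by
        have := traj_eq hred (p + s) (by omega)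
        omega
      have hlet : w.getD (p + s) 0 = n - s := block_letter s (by omega)
      have hnc : ¬ CrossAt w (n + 1) (p + s) := by
        unfold CrossAt
        rw [hcol, hlet]
        omega
      have h2 := kcnt_succ_of_not_cross hnc
      rw [show p + (s + 1) = p + s + 1 by omega, h2, ihs]
  have hst := stable (k - 1) le_rfl
  have hcol : colAt w (n + 1) (p + (k - 1)) = n + 1 - k := by
    have := traj_eq hred (p + (k - 1)) (by omega)
    omega
  have hlet : w.getD (p + (k - 1)) 0 = n - (k - 1) := block_letter (k - 1) (by omega)
  have := no_up_step hred (p + (k - 1)) (by omega)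
  rw [hcol, hlet] at this
  omega

lemma block_kcnt (hred : IsReducedAux n (u ++ descWord n ++ v)) :
    ∀ t ≤ n, kcnt (u ++ descWord n ++ v) (n + 1) (u.length + t) = t := by
  set w := u ++ descWord n ++ v with hw
  set p := u.length with hp
  have hLlen : w.length = p + n + v.length := by
    simp only [hw, hp, List.length_append, descWord_length]
  intro t
  induction t with
  | zero =>
    intro _
    rw [Nat.add_zero]
    exact block_kcnt_u hred
  | succ s ih =>
    intro hs
    have ihs := ih (by omega)
    have hcol : colAt w (n + 1) (p + s) = n + 1 - s := by
      have := traj_eq hred (p + s) (by omega)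
      omega
    have hlet : w.getD (p + s) 0 = n - s := block_letter s (by omega)
    have hc : CrossAt w (n + 1) (p + s) := by
      unfold CrossAt
      rw [hcol, hlet]
      omega
    have h2 := kcnt_succ_of_cross hc
    rw [show p + (s + 1) = p + s + 1 by omega, h2, ihs]

/-- classification of the nodes of `u ++ D_n ++ v`. -/
lemma block_classify (hred : IsReducedAux n (u ++ descWord n ++ v)) :
    ∀ j, 1 ≤ j → j ≤ (u ++ descWord n ++ v).length →
      (j ≤ u.length → AboveWireLast n (u ++ descWord n ++ v) j
          ∧ ¬ BelowWireLast n (u ++ descWord n ++ v) j) ∧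
      (u.length < j → j ≤ u.length + n → ¬ AboveWireLast n (u ++ descWord n ++ v) j
          ∧ ¬ BelowWireLast n (u ++ descWord n ++ v) j) ∧
      (u.length + n < j → BelowWireLast n (u ++ descWord n ++ v) j
          ∧ ¬ AboveWireLast n (u ++ descWord n ++ v) j) := by
  obtain ⟨hlen, hletters, hwp⟩ := id hred
  set w := u ++ descWord n ++ v with hw
  set p := u.length with hp
  have hLlen : w.length = p + n + v.length := by
    simp only [hw, hp, List.length_append, descWord_length]
  intro j hj1 hj2
  have hcolj : colAt w (n + 1) j + kcnt w (n + 1) j = n + 1 := traj_eq hred j hj2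
  have hletb : 1 ≤ w.getD (j - 1) 0 ∧ w.getD (j - 1) 0 ≤ n := by
    rw [List.getD_eq_getElem _ 0 (by omega)]
    exact hletters _ (List.getElem_mem (by omega))
  have hBA : BelowWireLast n w j ↔ colAt w (n + 1) j < w.getD (j - 1) 0 := Iff.rfl
  have hAA : AboveWireLast n w j ↔ w.getD (j - 1) 0 + 1 < colAt w (n + 1) j := Iff.rfl
  refine ⟨?_, ?_, ?_⟩
  · -- j ≤ p : above
    intro hjp
    have hpk : kcnt w (n + 1) p = 0 := block_kcnt_u hred
    have hk0 : kcnt w (n + 1) j = 0 := by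
      have h1 : kcnt w (n + 1) j ≤ kcnt w (n + 1) p := kcnt_mono hjp
      omega
    have hk0' : kcnt w (n + 1) (j - 1) = 0 := by
      have h1 : kcnt w (n + 1) (j - 1) ≤ kcnt w (n + 1) j := kcnt_mono (by omega)
      omega
    have hcol' : colAt w (n + 1) (j - 1) = n + 1 := by
      have := traj_eq hred (j - 1) (by omega)
      omega
    have hnc : ¬ CrossAt w (n + 1) (j - 1) := by
      intro hc
      have h1 := kcnt_succ_of_cross hc
      rw [show j - 1 + 1 = j by omega] at h1
      omega
    have hne : w.getD (j - 1) 0 ≠ n := by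
      intro h
      exact hnc (Or.inr (by rw [hcol', h]))
    rw [hBA, hAA]
    omega
  · -- block node : neither
    intro hjp hjpn
    set t := j - 1 - p with ht
    have hjt : j = p + (t + 1) := by omega
    have hkt1 : kcnt w (n + 1) (p + (t + 1)) = t + 1 := block_kcnt hred (t + 1) (by omega)
    have hkj : kcnt w (n + 1) j = t + 1 := by rw [hjt]; exact hkt1
    have hlet : w.getD (j - 1) 0 = n - t := by
      rw [show j - 1 = p + t by omega]
      exact block_letter t (by omega)
    rw [hBA, hAA, hlet]
    omega
  · -- below
    intro hjpn
    have hpn : kcnt w (n + 1) (p + n) = n := block_kcnt hred n le_rfl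
    have hkn : kcnt w (n + 1) j = n := by
      have h1 : kcnt w (n + 1) (p + n) ≤ kcnt w (n + 1) j := kcnt_mono (by omega)
      have h2 : kcnt w (n + 1) j ≤ cnt w (n + 1) := by
        rw [← kcnt_length]; exact kcnt_mono (by omega)
      rw [cnt_eq hred (by omega) (by omega)] at h2
      omega
    have hk' : kcnt w (n + 1) (j - 1) = n := by
      have h1 : kcnt w (n + 1) (p + n) ≤ kcnt w (n + 1) (j - 1) := kcnt_mono (by omega)
      have h2 : kcnt w (n + 1) (j - 1) ≤ kcnt w (n + 1) j := kcnt_mono (by omega)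
      omega
    have hcol' : colAt w (n + 1) (j - 1) = 1 := by
      have := traj_eq hred (j - 1) (by omega)
      omega
    have hnc : ¬ CrossAt w (n + 1) (j - 1) := by
      intro hc
      have h1 := kcnt_succ_of_cross hc
      rw [show j - 1 + 1 = j by omega] at h1
      omega
    have hne : w.getD (j - 1) 0 ≠ 1 := by
      intro h
      exact hnc (Or.inl (by rw [hcol', h]))
    rw [hBA, hAA]
    omega

end Block
/-! counting the nodes below / above the wire -/

def belowCount (n : ℕ) (w : List ℕ) : ℕ :=
  ((Finset.Icc 1 w.length).filter (fun j => BelowWireLast n w j)).card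

def aboveCount (n : ℕ) (w : List ℕ) : ℕ :=
  ((Finset.Icc 1 w.length).filter (fun j => AboveWireLast n w j)).card

lemma block_counts {n : ℕ} {u v : List ℕ} (hred : IsReducedAux n (u ++ descWord n ++ v)) :
    belowCount n (u ++ descWord n ++ v) = v.length ∧
    aboveCount n (u ++ descWord n ++ v) = u.length := by
  have hLlen : (u ++ descWord n ++ v).length = u.length + n + v.length := by
    simp only [List.length_append, descWord_length]
  constructor
  · have hset : (Finset.Icc 1 (u ++ descWord n ++ v).length).filter
        (fun j => BelowWireLast n (u ++ descWord n ++ v) j) =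
        Finset.Icc (u.length + n + 1) (u ++ descWord n ++ v).length := by
      ext j
      simp only [Finset.mem_filter, Finset.mem_Icc]
      constructor
      · rintro ⟨⟨h1, h2⟩, hB⟩
        have hc := block_classify hred j h1 h2
        refine ⟨?_, h2⟩
        by_contra hcon
        rcases le_or_gt j u.length with h | h
        · exact (hc.1 h).2 hB
        · exact ((hc.2.1 h (by omega)).2) hB
      · rintro ⟨h1, h2⟩
        have hc := block_classify hred j (by omega) h2
        exact ⟨⟨by omega, h2⟩, (hc.2.2 (by omega)).1⟩
    rw [belowCount, hset, Nat.card_Icc]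
    omega
  · have hset : (Finset.Icc 1 (u ++ descWord n ++ v).length).filter
        (fun j => AboveWireLast n (u ++ descWord n ++ v) j) =
        Finset.Icc 1 u.length := by
      ext j
      simp only [Finset.mem_filter, Finset.mem_Icc]
      constructor
      · rintro ⟨⟨h1, h2⟩, hB⟩
        have hc := block_classify hred j h1 h2
        refine ⟨h1, ?_⟩
        by_contra hcon
        rcases le_or_gt j (u.length + n) with h | h
        · exact ((hc.2.1 (by omega) h).1) hB
        · exact ((hc.2.2 h).2) hB
      · rintro ⟨h1, h2⟩
        have hc := block_classify hred j h1 (by omega)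
        exact ⟨⟨h1, by omega⟩, (hc.1 h2).1⟩
    rw [aboveCount, hset, Nat.card_Icc]
    omega
/-! invariance of the counts under 2-moves -/

/-- the index swap `q+1 ↔ q+2`. -/
def swapIdx (q j : ℕ) : ℕ := if j = q + 1 then q + 2 else if j = q + 2 then q + 1 else j

lemma swapIdx_invol (q j : ℕ) : swapIdx q (swapIdx q j) = j := by
  unfold swapIdx; split_ifs <;> omega

lemma card_swap_filter {L q : ℕ} (hq : q + 2 ≤ L) (P₁ P₂ : ℕ → Prop)
    (h : ∀ j, 1 ≤ j → j ≤ L → (P₁ j ↔ P₂ (swapIdx q j))) :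
    ((Finset.Icc 1 L).filter P₁).card = ((Finset.Icc 1 L).filter P₂).card := by
  have hmem : ∀ j, 1 ≤ j → j ≤ L → 1 ≤ swapIdx q j ∧ swapIdx q j ≤ L := by
    intro j h1 h2; unfold swapIdx; split_ifs <;> omega
  apply Finset.card_bij' (fun j _ => swapIdx q j) (fun j _ => swapIdx q j)
  · intro j hj
    rw [Finset.mem_filter, Finset.mem_Icc] at *
    obtain ⟨⟨h1, h2⟩, hp⟩ := hj
    exact ⟨(hmem j h1 h2), (h j h1 h2).mp hp⟩
  · intro j hj
    rw [Finset.mem_filter, Finset.mem_Icc] at *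
    obtain ⟨⟨h1, h2⟩, hp⟩ := hj
    have h3 := hmem j h1 h2
    refine ⟨h3, ?_⟩
    have h4 := h (swapIdx q j) h3.1 h3.2
    rw [swapIdx_invol] at h4
    exact h4.mpr hp
  · intro j _; exact swapIdx_invol q j
  · intro j _; exact swapIdx_invol q j

section TwoMove

variable {n a b : ℕ} {u v : List ℕ}

lemma tm_colAt_le {j : ℕ} (hj : j ≤ u.length) (r : ℕ) :
    colAt (u ++ a :: b :: v) r j = colAt (u ++ b :: a :: v) r j := by
  unfold colAt
  rw [List.take_append_of_le_length hj, List.take_append_of_le_length hj]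

lemma tm_colAt_ge (hab : a + 1 < b ∨ b + 1 < a) {j : ℕ} (hj : u.length + 2 ≤ j) (r : ℕ) :
    colAt (u ++ a :: b :: v) r j = colAt (u ++ b :: a :: v) r j := by
  unfold colAt
  rw [List.take_append, List.take_append]
  have h2 : j - u.length = (j - u.length - 2) + 1 + 1 := by omega
  rw [h2, List.take_succ_cons, List.take_succ_cons, List.take_succ_cons, List.take_succ_cons,
    wordProd_append, wordProd_append, wordProd_cons, wordProd_cons, wordProd_cons, wordProd_cons,
    ← mul_assoc (sTrans a) (sTrans b), ← mul_assoc (sTrans b) (sTrans a), sTrans_comm hab]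

lemma tm_letter_lt {j : ℕ} (hj : j < u.length) :
    (u ++ a :: b :: v).getD j 0 = (u ++ b :: a :: v).getD j 0 := by
  rw [List.getD_append _ _ _ _ hj, List.getD_append _ _ _ _ hj]

lemma tm_letter_ge {j : ℕ} (hj : u.length + 2 ≤ j) :
    (u ++ a :: b :: v).getD j 0 = (u ++ b :: a :: v).getD j 0 := by
  rw [List.getD_append_right _ _ _ _ (by omega), List.getD_append_right _ _ _ _ (by omega)]
  rw [show j - u.length = (j - u.length - 2) + 1 + 1 by omega]
  rw [List.getD_cons_succ, List.getD_cons_succ, List.getD_cons_succ, List.getD_cons_succ]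

lemma tm_letter_q : (u ++ a :: b :: v).getD u.length 0 = a := by
  rw [List.getD_append_right _ _ _ _ le_rfl, Nat.sub_self, List.getD_cons_zero]

lemma tm_letter_q1 : (u ++ a :: b :: v).getD (u.length + 1) 0 = b := by
  rw [List.getD_append_right _ _ _ _ (by omega), show u.length + 1 - u.length = 0 + 1 by omega,
    List.getD_cons_succ, List.getD_cons_zero]

lemma swap_cmp (hab : a + 1 < b ∨ b + 1 < a) (y : ℕ) :
    (sTrans b y < a ↔ y < a) ∧ (a + 1 < sTrans b y ↔ a + 1 < y) := by
  rw [sTrans_apply]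
  split_ifs <;> omega

lemma sTrans_comm_apply (hab : a + 1 < b ∨ b + 1 < a) (x : ℕ) :
    sTrans a (sTrans b x) = sTrans b (sTrans a x) := by
  rw [← Equiv.Perm.mul_apply, sTrans_comm hab, Equiv.Perm.mul_apply]

lemma tm_colAt_q1 (r : ℕ) :
    colAt (u ++ a :: b :: v) r (u.length + 1) =
      sTrans a (colAt (u ++ a :: b :: v) r u.length) := by
  have h1 : u.length < (u ++ a :: b :: v).length := by simp
  have h2 := colAt_succ (w := u ++ a :: b :: v) (j := u.length) h1 r
  rw [h2, tm_letter_q]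

lemma tm_colAt_q2 (r : ℕ) :
    colAt (u ++ a :: b :: v) r (u.length + 2) =
      sTrans b (sTrans a (colAt (u ++ a :: b :: v) r u.length)) := by
  have h1 : u.length + 1 < (u ++ a :: b :: v).length := by simp
  have h2 := colAt_succ (w := u ++ a :: b :: v) (j := u.length + 1) h1 r
  rw [show u.length + 2 = u.length + 1 + 1 by omega, h2, tm_letter_q1, tm_colAt_q1]

/-- a 2-move preserves both node counts. -/
lemma tm_counts (hab : a + 1 < b ∨ b + 1 < a) :
    belowCount n (u ++ a :: b :: v) = belowCount n (u ++ b :: a :: v) ∧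
    aboveCount n (u ++ a :: b :: v) = aboveCount n (u ++ b :: a :: v) := by
  have hab' : b + 1 < a ∨ a + 1 < b := hab.symm
  set q := u.length with hq
  have hlen : (u ++ a :: b :: v).length = (u ++ b :: a :: v).length := by simp
  have hlq : q + 2 ≤ (u ++ a :: b :: v).length := by simp [hq]
  have key : ∀ j, 1 ≤ j → j ≤ (u ++ a :: b :: v).length →
      (BelowWireLast n (u ++ a :: b :: v) j ↔ BelowWireLast n (u ++ b :: a :: v) (swapIdx q j)) ∧
      (AboveWireLast n (u ++ a :: b :: v) j ↔ AboveWireLast n (u ++ b :: a :: v) (swapIdx q j)) := by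
    intro j hj1 hj2
    unfold BelowWireLast AboveWireLast letterAt
    rw [wireCol_eq_colAt, wireCol_eq_colAt]
    rcases Nat.lt_or_ge j (q + 1) with hlt | hge
    · rw [show swapIdx q j = j by unfold swapIdx; split_ifs <;> omega]
      rw [tm_colAt_le (by omega), tm_letter_lt (by omega)]
      exact ⟨Iff.rfl, Iff.rfl⟩
    rcases Nat.lt_or_ge (q + 2) j with hgt | hle
    · rw [show swapIdx q j = j by unfold swapIdx; split_ifs <;> omega]
      rw [tm_colAt_ge hab (by omega), tm_letter_ge (by omega)]
      exact ⟨Iff.rfl, Iff.rfl⟩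
    rcases Nat.eq_or_lt_of_le hge with heq | hgt2
    · -- j = q + 1 ↦ q + 2
      rw [← heq, show swapIdx q (q + 1) = q + 2 by unfold swapIdx; split_ifs <;> omega]
      have e1 : colAt (u ++ a :: b :: v) (n + 1) (q + 1) =
          sTrans a (colAt (u ++ a :: b :: v) (n + 1) q) := tm_colAt_q1 _
      have e2 : colAt (u ++ b :: a :: v) (n + 1) (q + 2) =
          sTrans a (sTrans b (colAt (u ++ a :: b :: v) (n + 1) q)) := by
        rw [tm_colAt_q2 (n + 1), tm_colAt_le (le_refl u.length), sTrans_comm_apply hab]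
      have l1 : (u ++ a :: b :: v).getD (q + 1 - 1) 0 = a := by
        rw [show q + 1 - 1 = q by omega]; exact tm_letter_q
      have l2 : (u ++ b :: a :: v).getD (q + 2 - 1) 0 = a := by
        rw [show q + 2 - 1 = q + 1 by omega]; exact tm_letter_q1
      rw [e1, e2, l1, l2, sTrans_comm_apply hab]
      set y := sTrans a (colAt (u ++ a :: b :: v) (n + 1) q)
      exact ⟨((swap_cmp hab y).1).symm, ((swap_cmp hab y).2).symm⟩
    · -- j = q + 2 ↦ q + 1
      have heq2 : j = q + 2 := by omega
      rw [heq2, show swapIdx q (q + 2) = q + 1 by unfold swapIdx; split_ifs <;> omega]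
      have e1 : colAt (u ++ a :: b :: v) (n + 1) (q + 2) =
          sTrans b (sTrans a (colAt (u ++ a :: b :: v) (n + 1) q)) := tm_colAt_q2 _
      have e2 : colAt (u ++ b :: a :: v) (n + 1) (q + 1) =
          sTrans b (colAt (u ++ a :: b :: v) (n + 1) q) := by
        rw [tm_colAt_q1 (n + 1), tm_colAt_le (le_refl u.length)]
      have l1 : (u ++ a :: b :: v).getD (q + 2 - 1) 0 = b := by
        rw [show q + 2 - 1 = q + 1 by omega]; exact tm_letter_q1
      have l2 : (u ++ b :: a :: v).getD (q + 1 - 1) 0 = b := by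
        rw [show q + 1 - 1 = q by omega]; exact tm_letter_q
      rw [e1, e2, l1, l2, sTrans_comm_apply hab']
      set y := sTrans b (colAt (u ++ a :: b :: v) (n + 1) q)
      exact ⟨(swap_cmp hab' y).1, (swap_cmp hab' y).2⟩
  constructor
  · unfold belowCount
    rw [← hlen]
    exact card_swap_filter hlq _ _ (fun j h1 h2 => (key j h1 h2).1)
  · unfold aboveCount
    rw [← hlen]
    exact card_swap_filter hlq _ _ (fun j h1 h2 => (key j h1 h2).2)

end TwoMove
/-! 2-move equivalence: symmetry, preservation -/

lemma twoMoveStep_symm : Symmetric TwoMoveStep := by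
  rintro w w' ⟨u, v, a, b, hab, h1, h2⟩
  exact ⟨u, v, b, a, hab.symm, h2, h1⟩

lemma twoMoveEquiv_symm {w w' : List ℕ} (h : TwoMoveEquiv w w') : TwoMoveEquiv w' w :=
  (@Relation.ReflTransGen.stdSymm _ _ ⟨fun _ _ h' => twoMoveStep_symm h'⟩).symm _ _ h

lemma twoMoveEquiv_trans {w w' w'' : List ℕ} (h : TwoMoveEquiv w w')
    (h' : TwoMoveEquiv w' w'') : TwoMoveEquiv w w'' :=
  Relation.ReflTransGen.trans h h'

lemma tm_wordProd {a b : ℕ} {u v : List ℕ} (hab : a + 1 < b ∨ b + 1 < a) :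
    wordProd (u ++ a :: b :: v) = wordProd (u ++ b :: a :: v) := by
  rw [wordProd_append, wordProd_append, wordProd_cons, wordProd_cons, wordProd_cons,
    wordProd_cons, ← mul_assoc (sTrans a) (sTrans b), ← mul_assoc (sTrans b) (sTrans a),
    sTrans_comm hab]

lemma twoMoveStep_isReducedAux {n : ℕ} {w w' : List ℕ} (h : TwoMoveStep w w')
    (hred : IsReducedAux n w) : IsReducedAux n w' := by
  obtain ⟨u, v, a, b, hab, rfl, rfl⟩ := h
  obtain ⟨h1, h2, h3⟩ := hred
  refine ⟨by simpa using h1, ?_, by rw [← tm_wordProd hab]; exact h3⟩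
  intro x hx
  apply h2
  simp only [List.mem_append, List.mem_cons] at hx ⊢
  tauto

lemma twoMoveEquiv_isReducedAux {n : ℕ} {w w' : List ℕ} (h : TwoMoveEquiv w w')
    (hred : IsReducedAux n w) : IsReducedAux n w' := by
  induction h with
  | refl => exact hred
  | tail _ hstep ih => exact twoMoveStep_isReducedAux hstep ih

lemma twoMoveStep_counts {n : ℕ} {w w' : List ℕ} (h : TwoMoveStep w w') :
    belowCount n w = belowCount n w' ∧ aboveCount n w = aboveCount n w' := by
  obtain ⟨u, v, a, b, hab, rfl, rfl⟩ := h
  exact tm_counts hab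

lemma twoMoveEquiv_counts {n : ℕ} {w w' : List ℕ} (h : TwoMoveEquiv w w') :
    belowCount n w = belowCount n w' ∧ aboveCount n w = aboveCount n w' := by
  induction h with
  | refl => exact ⟨rfl, rfl⟩
  | tail _ hstep ih =>
    have h2 := twoMoveStep_counts (n := n) hstep
    exact ⟨ih.1.trans h2.1, ih.2.trans h2.2⟩

/-! the main D-statement -/

lemma ncard_below {n : ℕ} (w : List ℕ) :
    {j | ValidNode w j ∧ BelowWireLast n w j}.ncard = belowCount n w := by
  have hset : {j | ValidNode w j ∧ BelowWireLast n w j} =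
      ↑((Finset.Icc 1 w.length).filter (fun j => BelowWireLast n w j)) := by
    ext j
    simp only [Set.mem_setOf_eq, Finset.coe_filter, Finset.mem_Icc, ValidNode]
  rw [hset, Set.ncard_coe_finset]
  rfl

lemma ncard_above {n : ℕ} (w : List ℕ) :
    {j | ValidNode w j ∧ AboveWireLast n w j}.ncard = aboveCount n w := by
  have hset : {j | ValidNode w j ∧ AboveWireLast n w j} =
      ↑((Finset.Icc 1 w.length).filter (fun j => AboveWireLast n w j)) := by
    ext j
    simp only [Set.mem_setOf_eq, Finset.coe_filter, Finset.mem_Icc, ValidNode]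
  rw [hset, Set.ncard_coe_finset]
  rfl

lemma mainD {n : ℕ} {i u v : List ℕ} (hred : IsReducedAux n i)
    (huv : TwoMoveEquiv i (u ++ descWord n ++ v)) :
    v.length = {j | ValidNode i j ∧ BelowWireLast n i j}.ncard ∧
    u.length = {j | ValidNode i j ∧ AboveWireLast n i j}.ncard := by
  have hred' : IsReducedAux n (u ++ descWord n ++ v) := twoMoveEquiv_isReducedAux huv hred
  have hc := twoMoveEquiv_counts (n := n) huv
  have hb := block_counts hred'
  rw [ncard_below, ncard_above, hc.1, hc.2, hb.1, hb.2]
  exact ⟨rfl, rfl⟩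

/-! the starw symmetry -/

def starw (n : ℕ) (w : List ℕ) : List ℕ := w.map (fun a => n + 1 - a)

lemma longestPerm_mul_self (n : ℕ) : longestPerm n * longestPerm n = 1 := by
  ext x
  simp only [Equiv.Perm.mul_apply, longestPerm_apply, Equiv.Perm.one_apply]
  split_ifs <;> omega

lemma sTrans_star {n a : ℕ} (h1 : 1 ≤ a) (h2 : a ≤ n) :
    sTrans (n + 1 - a) = longestPerm n * sTrans a * longestPerm n := by
  ext x
  simp only [Equiv.Perm.mul_apply, longestPerm_apply, sTrans_apply]
  split_ifs <;> omega

lemma wordProd_star {n : ℕ} {w : List ℕ} (hw : ∀ a ∈ w, 1 ≤ a ∧ a ≤ n) :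
    wordProd (starw n w) = longestPerm n * wordProd w * longestPerm n := by
  induction w with
  | nil =>
    simp only [starw, List.map_nil, wordProd_nil, mul_one]
    exact (longestPerm_mul_self n).symm
  | cons a t ih =>
    have ha := hw a (by simp)
    have ht : ∀ b ∈ t, 1 ≤ b ∧ b ≤ n := fun b hb => hw b (by simp [hb])
    simp only [starw, List.map_cons, wordProd_cons] at *
    rw [ih ht, sTrans_star ha.1 ha.2]
    have hLL := longestPerm_mul_self n
    calc longestPerm n * sTrans a * longestPerm n *
          (longestPerm n * wordProd t * longestPerm n)
        = longestPerm n * sTrans a * (longestPerm n * longestPerm n) *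
          wordProd t * longestPerm n := by group
      _ = longestPerm n * (sTrans a * wordProd t) * longestPerm n := by
          rw [hLL]; group

lemma star_isReducedAux {n : ℕ} {w : List ℕ} (hred : IsReducedAux n w) :
    IsReducedAux n (starw n w) := by
  obtain ⟨h1, h2, h3⟩ := hred
  refine ⟨by simpa [starw] using h1, ?_, ?_⟩
  · intro x hx
    simp only [starw, List.mem_map] at hx
    obtain ⟨a, ha, rfl⟩ := hx
    have := h2 a ha
    omega
  · rw [wordProd_star h2, h3]
    have hLL := longestPerm_mul_self n
    calc longestPerm n * longestPerm n * longestPerm n = 1 * longestPerm n := by rw [hLL]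
      _ = longestPerm n := by group

lemma star_ascWord (n : ℕ) : starw n (ascWord n) = descWord n := by
  apply List.ext_getElem
  · simp [starw, ascWord, descWord]
  · intro j h1 h2
    simp only [starw, ascWord, descWord, List.getElem_map, List.getElem_reverse,
      List.getElem_range, List.length_map, List.length_range]
    simp only [starw, ascWord, List.length_map, List.length_range] at h1
    omega

lemma star_twoMoveStep {n : ℕ} {w w' : List ℕ} (hw : ∀ a ∈ w, 1 ≤ a ∧ a ≤ n)
    (h : TwoMoveStep w w') : TwoMoveStep (starw n w) (starw n w') := by
  obtain ⟨u, v, a, b, hab, rfl, rfl⟩ := h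
  refine ⟨starw n u, starw n v, n + 1 - a, n + 1 - b, ?_, ?_, ?_⟩
  · have ha : 1 ≤ a ∧ a ≤ n := hw a (by simp)
    have hb : 1 ≤ b ∧ b ≤ n := hw b (by simp)
    omega
  · simp [starw]
  · simp [starw]

lemma twoMoveStep_letters {n : ℕ} {w w' : List ℕ} (h : TwoMoveStep w w')
    (hw : ∀ a ∈ w, 1 ≤ a ∧ a ≤ n) : ∀ a ∈ w', 1 ≤ a ∧ a ≤ n := by
  obtain ⟨u, v, a, b, hab, rfl, rfl⟩ := h
  intro x hx
  apply hw
  simp only [List.mem_append, List.mem_cons] at hx ⊢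
  tauto

lemma twoMoveEquiv_letters {n : ℕ} {w w' : List ℕ} (h : TwoMoveEquiv w w')
    (hw : ∀ a ∈ w, 1 ≤ a ∧ a ≤ n) : ∀ a ∈ w', 1 ≤ a ∧ a ≤ n := by
  induction h with
  | refl => exact hw
  | tail _ hstep ih => exact twoMoveStep_letters hstep ih

lemma star_twoMoveEquiv {n : ℕ} {w w' : List ℕ} (hw : ∀ a ∈ w, 1 ≤ a ∧ a ≤ n)
    (h : TwoMoveEquiv w w') : TwoMoveEquiv (starw n w) (starw n w') := by
  induction h with
  | refl => exact Relation.ReflTransGen.refl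
  | @tail x y hxy hstep ih =>
    exact Relation.ReflTransGen.tail ih
      (star_twoMoveStep (twoMoveEquiv_letters hxy hw) hstep)

/-- correspondence of the wire-1 predicates with the wire-(n+1) predicates of the starw. -/
lemma star_below_above {n : ℕ} {w : List ℕ} (hw : ∀ a ∈ w, 1 ≤ a ∧ a ≤ n)
    {j : ℕ} (hj1 : 1 ≤ j) (hj2 : j ≤ w.length) :
    (BelowWireOne w j ↔ BelowWireLast n (starw n w) j) ∧
    (AboveWireOne w j ↔ AboveWireLast n (starw n w) j) := by
  have hlet : letterAt (starw n w) j = n + 1 - letterAt w j := by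
    unfold letterAt starw
    rw [List.getD_eq_getElem (w.map _) 0 (by simp only [List.length_map]; omega),
      List.getD_eq_getElem w 0 (by omega)]
    simp
  have hletb : 1 ≤ letterAt w j ∧ letterAt w j ≤ n := by
    unfold letterAt
    rw [List.getD_eq_getElem _ 0 (by omega)]
    exact hw _ (List.getElem_mem (by omega))
  have htake : starw n (w.take j) = (starw n w).take j := by
    simp [starw, List.map_take]
  have hcol : wireCol (starw n w) j (n + 1) = n + 2 - wireCol w j 1 := by
    unfold wireCol stateBelow
    rw [← htake, wordProd_star (fun a ha => hw a (List.mem_of_mem_take ha))]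
    have h1 : ∀ (f g : Equiv.Perm ℕ) (x : ℕ), (f * g).symm x = g.symm (f.symm x) := by
      intro f g x
      rw [Equiv.Perm.mul_def, Equiv.symm_trans_apply]
    rw [h1, h1, longestPerm_symm]
    have h2 : longestPerm n (n + 1) = 1 := by
      rw [longestPerm_apply, if_pos (⟨by omega, le_rfl⟩ : 1 ≤ n + 1 ∧ n + 1 ≤ n + 1)]
      omega
    rw [h2]
    have h3 := (wordProd_mem_Icc (w := w.take j)
      (fun a ha => hw a (List.mem_of_mem_take ha)) 1 le_rfl (by omega)).2
    rw [longestPerm_apply, if_pos ⟨h3.1, h3.2⟩]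
  have hcolb : 1 ≤ wireCol w j 1 ∧ wireCol w j 1 ≤ n + 1 := by
    unfold wireCol stateBelow
    exact (wordProd_mem_Icc (w := w.take j)
      (fun a ha => hw a (List.mem_of_mem_take ha)) 1 le_rfl (by omega)).2
  unfold BelowWireOne AboveWireOne BelowWireLast AboveWireLast
  rw [hlet, hcol]
  omega

/-- the main A-statement. -/
lemma mainA {n : ℕ} {i u v : List ℕ} (hred : IsReducedAux n i)
    (huv : TwoMoveEquiv i (u ++ ascWord n ++ v)) :
    v.length = {j | ValidNode i j ∧ BelowWireOne i j}.ncard ∧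
    u.length = {j | ValidNode i j ∧ AboveWireOne i j}.ncard := by
  have hlet := hred.2.1
  have hred' : IsReducedAux n (starw n i) := star_isReducedAux hred
  have hequiv : TwoMoveEquiv (starw n i) (starw n u ++ descWord n ++ starw n v) := by
    have := star_twoMoveEquiv hlet huv
    rw [show starw n (u ++ ascWord n ++ v) = starw n u ++ descWord n ++ starw n v by
      simp only [starw, List.map_append]
      rw [show (ascWord n).map (fun a => n + 1 - a) = descWord n from star_ascWord n]] at this
    exact this
  have hmain := mainD hred' hequiv
  have hlen : (starw n i).length = i.length := by simp [starw]
  have hbset : {j | ValidNode (starw n i) j ∧ BelowWireLast n (starw n i) j} =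
      {j | ValidNode i j ∧ BelowWireOne i j} := by
    ext j
    simp only [Set.mem_setOf_eq, ValidNode, hlen]
    constructor
    · rintro ⟨⟨h1, h2⟩, h3⟩
      exact ⟨⟨h1, h2⟩, ((star_below_above hlet h1 h2).1).mpr h3⟩
    · rintro ⟨⟨h1, h2⟩, h3⟩
      exact ⟨⟨h1, h2⟩, ((star_below_above hlet h1 h2).1).mp h3⟩
  have haset : {j | ValidNode (starw n i) j ∧ AboveWireLast n (starw n i) j} =
      {j | ValidNode i j ∧ AboveWireOne i j} := by
    ext j
    simp only [Set.mem_setOf_eq, ValidNode, hlen]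
    constructor
    · rintro ⟨⟨h1, h2⟩, h3⟩
      exact ⟨⟨h1, h2⟩, ((star_below_above hlet h1 h2).2).mpr h3⟩
    · rintro ⟨⟨h1, h2⟩, h3⟩
      exact ⟨⟨h1, h2⟩, ((star_below_above hlet h1 h2).2).mp h3⟩
  constructor
  · rw [← hbset]
    have := hmain.1
    simpa [starw] using this
  · rw [← haset]
    have := hmain.2
    simpa [starw] using this

/-! invariance of the indices -/

lemma ind_sets_eq {i i' : List ℕ} (h : TwoMoveEquiv i i') (D : List ℕ)
    (f : List ℕ → List ℕ → ℕ) :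
    {s | ∃ u v : List ℕ, f u v = s ∧ TwoMoveEquiv i (u ++ D ++ v)} =
    {s | ∃ u v : List ℕ, f u v = s ∧ TwoMoveEquiv i' (u ++ D ++ v)} := by
  ext s
  simp only [Set.mem_setOf_eq]
  constructor
  · rintro ⟨u, v, h1, h2⟩
    exact ⟨u, v, h1, twoMoveEquiv_trans (twoMoveEquiv_symm h) h2⟩
  · rintro ⟨u, v, h1, h2⟩
    exact ⟨u, v, h1, twoMoveEquiv_trans h h2⟩

/-- well-definedness of the indices.
In any decomposition `i ∼ u D_n v` the length of `v` equals the number of nodes of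
`G(i)` below the wire `ℓ_{n+1}`, and the length of `u` the number of nodes above
`ℓ_{n+1}`; analogously for decompositions `i ∼ u' A_n v'` with the wire `ℓ_1`.
In particular `ind_D`, `ind_A`, `coind_D`, `coind_A` are well defined on 2-move
equivalence classes. -/
theorem statement1 (n : ℕ) (hn : 1 ≤ n) (i : List ℕ) (hi : IsReduced n i) :
    (∀ u v : List ℕ, TwoMoveEquiv i (u ++ descWord n ++ v) →
      v.length = {j | ValidNode i j ∧ BelowWireLast n i j}.ncard ∧
      u.length = {j | ValidNode i j ∧ AboveWireLast n i j}.ncard) ∧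
    (∀ u v : List ℕ, TwoMoveEquiv i (u ++ ascWord n ++ v) →
      v.length = {j | ValidNode i j ∧ BelowWireOne i j}.ncard ∧
      u.length = {j | ValidNode i j ∧ AboveWireOne i j}.ncard) ∧
    (∀ i' : List ℕ, TwoMoveEquiv i i' →
      indD n i = indD n i' ∧ indA n i = indA n i' ∧
      coindD n i = coindD n i' ∧ coindA n i = coindA n i') := by
  have hred : IsReducedAux n i := hi
  refine ⟨?_, ?_, ?_⟩
  · intro u v huv
    exact mainD hred huv
  · intro u v huv
    exact mainA hred huv
  · intro i' h
    refine ⟨?_, ?_, ?_, ?_⟩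
    · exact congrArg sInf (ind_sets_eq h (descWord n) (fun u v => v.length))
    · exact congrArg sInf (ind_sets_eq h (ascWord n) (fun u v => v.length))
    · exact congrArg sInf (ind_sets_eq h (descWord n) (fun u v => u.length))
    · exact congrArg sInf (ind_sets_eq h (ascWord n) (fun u v => u.length))


end StringPolytope
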